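/- Let ρ be a K×K real matrix with nonnegative entries, ‖ρ‖ < 1 (Euclidean operator norm), and set C = (1 + ‖ρ‖)/(1 - ‖ρ‖) and φ(θ)_ℓ = Σ_j ρ_{ℓ,j}(e^{θ_j} - 1). Define g₁(θ) = θ + φ(θ) and g_n(θ) = θ + φ(g_{n-1}(θ)) for n ≥ 2. If ‖θ‖₂ ≤ (1+C)⁻¹ · log(C/(‖ρ‖(1+C))), then ‖g_n(θ)‖₂ ≤ ‖θ‖₂ · (1 + C) for all n ≥ 1. -/

import Mathlib

open Matrix

/-- Key induction: if `‖θ‖₂ ≤ (1+C)⁻¹ log(C/(‖ρ‖(1+C)))` with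
`C = (1+‖ρ‖)/(1-‖ρ‖)`, then the iterates `g_n(θ) = θ + φ(g_{n-1}(θ))`,
`g₁(θ) = θ + φ(θ)`, where `φ(θ)_ℓ = Σ_j ρ_{ℓ,j}(e^{θ_j} - 1)`, satisfy
`‖g_n(θ)‖₂ ≤ ‖θ‖₂ (1 + C)` for all `n ≥ 1`. -/
theorem iterates_bounded (K : ℕ) (ρ : Matrix (Fin K) (Fin K) ℝ)
    (hnn : ∀ i j, 0 ≤ ρ i j)
    (hρ : ‖Matrix.toEuclideanCLM (𝕜 := ℝ) ρ‖ < 1)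
    (C : ℝ)
    (hC : C = (1 + ‖Matrix.toEuclideanCLM (𝕜 := ℝ) ρ‖) /
              (1 - ‖Matrix.toEuclideanCLM (𝕜 := ℝ) ρ‖))
    (φ : EuclideanSpace ℝ (Fin K) → EuclideanSpace ℝ (Fin K))
    (hφ : ∀ θ ℓ, φ θ ℓ = ∑ j, ρ ℓ j * (Real.exp (θ j) - 1))
    (θ : EuclideanSpace ℝ (Fin K))
    (g : ℕ → EuclideanSpace ℝ (Fin K))
    (hg1 : g 1 = θ + φ θ)
    (hgrec : ∀ n, 1 ≤ n → g (n + 1) = θ + φ (g n))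
    (hθ : ‖θ‖ ≤ (1 + C)⁻¹ *
      Real.log (C / (‖Matrix.toEuclideanCLM (𝕜 := ℝ) ρ‖ * (1 + C)))) :
    ∀ n, 1 ≤ n → ‖g n‖ ≤ ‖θ‖ * (1 + C) := by
  set r := ‖Matrix.toEuclideanCLM (𝕜 := ℝ) ρ‖ with hr
  have hr0 : 0 ≤ r := norm_nonneg _
  have hCpos : 0 < C := by
    rw [hC]; exact div_pos (by linarith) (by linarith)
  have h1C : (0:ℝ) < 1 + C := by linarith
  -- componentwise exp bound
  have hexp : ∀ t : ℝ, |Real.exp t - 1| ≤ Real.exp |t| * |t| := by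
    intro t
    rcases le_or_gt 0 t with ht | ht
    · rw [abs_of_nonneg ht, abs_of_nonneg (by linarith [Real.one_le_exp ht])]
      have h1 : 1 - t ≤ Real.exp (-t) := by
        have := Real.add_one_le_exp (-t); linarith
      have h2 : Real.exp (-t) = 1 / Real.exp t := by
        rw [Real.exp_neg]; ring
      have h3 : 0 < Real.exp t := Real.exp_pos t
      rw [h2] at h1
      have h4 : (1 - t) * Real.exp t ≤ 1 := by
        have h5 := mul_le_mul_of_nonneg_right h1 h3.le
        rw [one_div, inv_mul_cancel₀ (ne_of_gt h3)] at h5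
        exact h5
      nlinarith
    · rw [abs_of_neg ht, abs_of_nonpos (by linarith [Real.exp_lt_one_iff.2 ht])]
      have h1 := Real.add_one_le_exp t
      have h2 : (1:ℝ) ≤ Real.exp (-t) := Real.one_le_exp (by linarith)
      nlinarith
  -- coordinate bound
  have hcoord : ∀ (x : EuclideanSpace ℝ (Fin K)) (j : Fin K), |x j| ≤ ‖x‖ := by
    intro x j
    have h1 : |x j| = Real.sqrt (|x j| ^ 2) := by
      rw [Real.sqrt_sq (abs_nonneg _)]
    rw [h1, EuclideanSpace.norm_eq]
    apply Real.sqrt_le_sqrt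
    have := Finset.single_le_sum (f := fun i => ‖x i‖ ^ 2)
      (fun i _ => by positivity) (Finset.mem_univ j)
    simpa using this
  -- key bound on φ
  have hφbound : ∀ x : EuclideanSpace ℝ (Fin K),
      ‖φ x‖ ≤ r * Real.exp ‖x‖ * ‖x‖ := by
    intro x
    set v : EuclideanSpace ℝ (Fin K) :=
      (WithLp.equiv 2 (Fin K → ℝ)).symm (fun j => Real.exp (x j) - 1) with hv
    have hφv : φ x = Matrix.toEuclideanCLM (𝕜 := ℝ) ρ v := by
      ext ℓ
      rw [hφ, hv, WithLp.equiv_symm_apply, Matrix.toEuclideanCLM_toLp]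
      simp [Matrix.mulVec, dotProduct]
    have hvle : ‖v‖ ≤ Real.exp ‖x‖ * ‖x‖ := by
      rw [hv, EuclideanSpace.norm_eq]
      have hxeq : Real.exp ‖x‖ * ‖x‖ =
          Real.sqrt (∑ j, (Real.exp ‖x‖ * ‖x j‖) ^ 2) := by
        have : ∑ j, (Real.exp ‖x‖ * ‖x j‖) ^ 2
            = (Real.exp ‖x‖) ^ 2 * ∑ j, ‖x j‖ ^ 2 := by
          rw [Finset.mul_sum]; congr 1; ext j; ring
        rw [this, Real.sqrt_mul (by positivity),
          Real.sqrt_sq (by positivity), EuclideanSpace.norm_eq]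
      rw [hxeq]
      apply Real.sqrt_le_sqrt
      apply Finset.sum_le_sum
      intro j _
      have h1 : ‖(WithLp.equiv 2 (Fin K → ℝ)).symm (fun j => Real.exp (x j) - 1) j‖
          = |Real.exp (x j) - 1| := rfl
      rw [h1]
      have h2 : |Real.exp (x j) - 1| ≤ Real.exp ‖x‖ * ‖x j‖ := by
        calc |Real.exp (x j) - 1| ≤ Real.exp |x j| * |x j| := hexp _
          _ ≤ Real.exp ‖x‖ * |x j| :=
              mul_le_mul_of_nonneg_right
                (Real.exp_le_exp.2 (hcoord x j)) (abs_nonneg _)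
          _ = Real.exp ‖x‖ * ‖x j‖ := rfl
      have h3 : 0 ≤ |Real.exp (x j) - 1| := abs_nonneg _
      nlinarith [Real.exp_pos ‖x‖, norm_nonneg (x j)]
    calc ‖φ x‖ = ‖Matrix.toEuclideanCLM (𝕜 := ℝ) ρ v‖ := by rw [hφv]
      _ ≤ r * ‖v‖ := ContinuousLinearMap.le_opNorm _ _
      _ ≤ r * (Real.exp ‖x‖ * ‖x‖) := by gcongr
      _ = r * Real.exp ‖x‖ * ‖x‖ := by ring
  -- key inequality
  have hkey : r * Real.exp (‖θ‖ * (1 + C)) * (1 + C) ≤ C := by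
    rcases eq_or_lt_of_le hr0 with hr0' | hrpos
    · rw [← hr0']; simpa using hCpos.le
    · have hX : 0 < C / (r * (1 + C)) := by positivity
      have h1 : ‖θ‖ * (1 + C) ≤ Real.log (C / (r * (1 + C))) := by
        rw [mul_comm]
        calc (1 + C) * ‖θ‖ ≤ (1 + C) * ((1 + C)⁻¹ *
            Real.log (C / (r * (1 + C)))) := by gcongr
          _ = Real.log (C / (r * (1 + C))) := by field_simp
      have h2 : Real.exp (‖θ‖ * (1 + C)) ≤ C / (r * (1 + C)) := by
        calc Real.exp (‖θ‖ * (1 + C)) ≤ Real.exp (Real.log (C / (r * (1 + C)))) :=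
            Real.exp_le_exp.2 h1
          _ = C / (r * (1 + C)) := Real.exp_log hX
      calc r * Real.exp (‖θ‖ * (1 + C)) * (1 + C)
          ≤ r * (C / (r * (1 + C))) * (1 + C) := by gcongr
        _ = C := by field_simp
  -- one-step bound
  have hstep : ∀ x : EuclideanSpace ℝ (Fin K), ‖x‖ ≤ ‖θ‖ * (1 + C) →
      ‖θ + φ x‖ ≤ ‖θ‖ * (1 + C) := by
    intro x hx
    have h0 : 0 ≤ ‖θ‖ := norm_nonneg θ
    calc ‖θ + φ x‖ ≤ ‖θ‖ + ‖φ x‖ := norm_add_le _ _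
      _ ≤ ‖θ‖ + r * Real.exp ‖x‖ * ‖x‖ := by linarith [hφbound x]
      _ ≤ ‖θ‖ + r * Real.exp (‖θ‖ * (1 + C)) * (‖θ‖ * (1 + C)) := by
          gcongr
      _ = ‖θ‖ + (r * Real.exp (‖θ‖ * (1 + C)) * (1 + C)) * ‖θ‖ := by ring
      _ ≤ ‖θ‖ + C * ‖θ‖ := by
          nlinarith [mul_le_mul_of_nonneg_right hkey h0]
      _ = ‖θ‖ * (1 + C) := by ring
  -- induction
  intro n hn
  induction n with
  | zero => omega
  | succ m ih =>
    rcases Nat.lt_or_ge 1 (m + 1) with hm | hm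
    · have hm1 : 1 ≤ m := by omega
      rw [hgrec m hm1]
      exact hstep _ (ih hm1)
    · have : m = 0 := by omega
      subst this
      rw [hg1]
      apply hstep
      nlinarith [norm_nonneg θ]
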